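/- For coprime positive integers a, b, the number of large (a,b)-Schröder paths with exactly i diagonal steps is Sch(a,b,i) = (1/a)·C(a,i)·C(a+b−1−i, b−i) = (1/b)·C(b,i)·C(a+b−1−i, a−i). -/

import Mathlib

/-- Steps of a (Schröder) lattice path: north, east, diagonal. -/
inductive Step : Type
  | N | E | D
deriving DecidableEq, Repr

/-- Total horizontal displacement of a path. -/
def eLen (p : List Step) : ℕ := p.count Step.E + p.count Step.D

/-- Total vertical displacement of a path. -/
def nLen (p : List Step) : ℕ := p.count Step.N + p.count Step.D

/-- A lattice path uses only `N` and `E` steps. -/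
def IsLatticePath (ν : List Step) : Prop := Step.D ∉ ν

/-- `colVal p x` is twice the starting height of the step of `p` crossing the vertical
strip between abscissas `x` and `x+1`, plus `1` if that step is diagonal.  Comparing these
values columnwise is equivalent to comparing the heights of the paths over each strip. -/
def colVal : List Step → ℕ → ℕ
  | [], _ => 0
  | Step.N :: p, x => colVal p x + 2
  | Step.E :: _, 0 => 0
  | Step.E :: p, x+1 => colVal p x
  | Step.D :: _, 0 => 1
  | Step.D :: p, x+1 => colVal p x + 2

/-- `π` stays weakly above `ρ` (same endpoints intended). -/
def WeaklyAbove (π ρ : List Step) : Prop := ∀ x, colVal ρ x ≤ colVal π x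

/-- Replace every peak (consecutive `NE`) of a path by a diagonal step; applied to `ν`
this gives the path `μ` of the large ν-Schröder path definition. -/
def cutPeaks : List Step → List Step
  | [] => []
  | Step.N :: Step.E :: p => Step.D :: cutPeaks p
  | s :: p => s :: cutPeaks p

/-- A ν-Dyck path: an `N,E` path with the same endpoints as `ν` staying weakly above `ν`. -/
def IsNuDyck (ν π : List Step) : Prop :=
  Step.D ∉ π ∧ eLen π = eLen ν ∧ nLen π = nLen ν ∧ WeaklyAbove π ν

/-- A (small) ν-Schröder path: an `N,E,D` path with the same endpoints as `ν` staying weakly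
above `ν` (this automatically forbids diagonal steps on the ν-diagonal). -/
def IsSmallSchroder (ν π : List Step) : Prop :=
  eLen π = eLen ν ∧ nLen π = nLen ν ∧ WeaklyAbove π ν

/-- A large ν-Schröder path: an `N,E,D` path with the same endpoints as `ν` staying weakly
above the path obtained from `ν` by replacing each peak by a diagonal step. -/
def IsLargeSchroder (ν π : List Step) : Prop :=
  eLen π = eLen ν ∧ nLen π = nLen ν ∧ WeaklyAbove π (cutPeaks ν)

/-- Number of peaks (consecutive `NE` pairs). -/
def peaks (p : List Step) : ℕ := (p.zip p.tail).count (Step.N, Step.E)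

/-- Number of valleys (consecutive `EN` pairs). -/
def valleys (p : List Step) : ℕ := (p.zip p.tail).count (Step.E, Step.N)

/-- Lattice points at which valleys of a path occur (starting the path at `(x,y)`). -/
def valleyPts : List Step → ℕ → ℕ → List (ℕ × ℕ)
  | [], _, _ => []
  | Step.E :: p, x, y =>
      (if p.head? = some Step.N then [(x+1, y)] else []) ++ valleyPts p (x+1) y
  | Step.N :: p, x, y => valleyPts p x (y+1)
  | Step.D :: p, x, y => valleyPts p (x+1) (y+1)

/-- Lattice points at which high peaks (peaks strictly above `ν`) of a path occur. -/
def highPeakPts (ν : List Step) : List Step → ℕ → ℕ → List (ℕ × ℕ)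
  | [], _, _ => []
  | Step.N :: p, x, y =>
      (if p.head? = some Step.E ∧ colVal ν x < 2*(y+1) then [(x, y+1)] else []) ++
        highPeakPts ν p x (y+1)
  | Step.E :: p, x, y => highPeakPts ν p (x+1) y
  | Step.D :: p, x, y => highPeakPts ν p (x+1) (y+1)

/-- Number of high peaks of `π` relative to `ν`. -/
def highPeaks (ν π : List Step) : ℕ := (highPeakPts ν π 0 0).length

/-- j-th ν-Narayana number: number of ν-Dyck paths with exactly `j` valleys. -/
noncomputable def Nar (ν : List Step) (j : ℕ) : ℕ :=
  Nat.card {π : List Step // IsNuDyck ν π ∧ valleys π = j}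

/-- Number of small ν-Schröder paths with exactly `i` diagonal steps. -/
noncomputable def schNum (ν : List Step) (i : ℕ) : ℕ :=
  Nat.card {π : List Step // IsSmallSchroder ν π ∧ π.count Step.D = i}

/-- `lowH ν x` is the lowest height of a point of `ν` at abscissa `x`. -/
def lowH : List Step → ℕ → ℕ
  | _, 0 => 0
  | [], _+1 => 0
  | Step.N :: p, x+1 => lowH p (x+1) + 1
  | Step.E :: p, x+1 => lowH p x
  | Step.D :: p, x+1 => lowH p x + 1

/-- The lowest lattice path from `(0,0)` to `(b,a)` weakly above the line segment
from `(0,0)` to `(b,a)`. -/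
def nuAB (a b : ℕ) : List Step :=
  (List.range b).flatMap (fun x =>
    List.replicate (((x+1)*a + b - 1)/b - (x*a + b - 1)/b) Step.N ++ [Step.E])

/-- Number of large rational `(a,b)`-Schröder paths with `i` diagonal steps. -/
noncomputable def largeCount (a b i : ℕ) : ℕ :=
  Nat.card {π : List Step // IsLargeSchroder (nuAB a b) π ∧ π.count Step.D = i}

/-- Number of small rational `(a,b)`-Schröder paths with `i` diagonal steps. -/
noncomputable def smallCount (a b i : ℕ) : ℕ :=
  Nat.card {π : List Step // IsSmallSchroder (nuAB a b) π ∧ π.count Step.D = i}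

/-- Binomial coefficient with an integer lower entry (zero when negative). -/
def chooseZ (n : ℕ) (k : ℤ) : ℕ := if 0 ≤ k then n.choose k.toNat else 0

/-- The region weakly above `ν` in the rectangle `[0,b] × [0,a]`. -/
def InRegion (ν : List Step) (p : ℕ × ℕ) : Prop :=
  p.1 ≤ eLen ν ∧ p.2 ≤ nLen ν ∧ lowH ν p.1 ≤ p.2

/-- Two points of the region are ν-incompatible if one is strictly southwest of the other and
the rectangle they span lies in the region (equivalently its bottom-right corner does). -/
def Incompat (ν : List Step) (p q : ℕ × ℕ) : Prop :=
  ((p.1 < q.1 ∧ p.2 < q.2) ∨ (q.1 < p.1 ∧ q.2 < p.2)) ∧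
    InRegion ν (max p.1 q.1, min p.2 q.2)

/-- A ν-binary tree: a maximal set of pairwise ν-compatible points of the region. -/
def IsBinaryTree (ν : List Step) (T : Finset (ℕ × ℕ)) : Prop :=
  (∀ p ∈ T, InRegion ν p) ∧ (∀ p ∈ T, ∀ q ∈ T, ¬ Incompat ν p q) ∧
    ∀ r, InRegion ν r → (∀ p ∈ T, ¬ Incompat ν r p) → r ∈ T

/-- A ν-Schröder tree: pairwise ν-compatible points of the region containing the root
`(0,a)` and meeting every row and every column. -/
def IsSchroderTree (ν : List Step) (T : Finset (ℕ × ℕ)) : Prop :=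
  (∀ p ∈ T, InRegion ν p) ∧ (∀ p ∈ T, ∀ q ∈ T, ¬ Incompat ν p q) ∧
    (0, nLen ν) ∈ T ∧ (∀ y ≤ nLen ν, ∃ p ∈ T, p.2 = y) ∧ (∀ x ≤ eLen ν, ∃ p ∈ T, p.1 = x)

/-- One contraction step: delete a node, provided the result is still a ν-Schröder tree. -/
def ContractStep (ν : List Step) (T T' : Finset (ℕ × ℕ)) : Prop :=
  ∃ q ∈ T, T' = T.erase q ∧ IsSchroderTree ν T'

/-- `p` is a leaf of the (plane tree associated to the) node set `T`: no node strictly below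
it in its column and none strictly to its right in its row. -/
def IsLeafIn (T : Finset (ℕ × ℕ)) (p : ℕ × ℕ) : Prop :=
  (∀ q ∈ T, ¬(q.1 = p.1 ∧ q.2 < p.2)) ∧ (∀ q ∈ T, ¬(q.2 = p.2 ∧ p.1 < q.1))

/-- Starting points of vertical runs and ending points of horizontal runs of `ν`. -/
def leafPts (ν : List Step) : Finset (ℕ × ℕ) :=
  (valleyPts ν 0 0).toFinset ∪ (if ν.head? = some Step.N then {((0 : ℕ), (0 : ℕ))} else ∅) ∪
    (if ν.getLast? = some Step.E then {(eLen ν, nLen ν)} else ∅)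

/-- `horizNu ν x y`: maximal number of east steps that can be placed starting at `(x,y)`
before crossing `ν` (staying within the bounding rectangle). -/
def horizNu (ν : List Step) (x y : ℕ) : ℕ :=
  ((Finset.Icc 1 (eLen ν - x)).filter (fun k => lowH ν (x + k) ≤ y)).card

/-- No `N` step of the given path (started at `(x,y)`) has initial point with
`horizNu`-value `h`. -/
def noNAt (ν : List Step) (h : ℕ) : List Step → ℕ → ℕ → Prop
  | [], _, _ => True
  | Step.N :: p, x, y => horizNu ν x y ≠ h ∧ noNAt ν h p x (y+1)
  | Step.E :: p, x, y => noNAt ν h p (x+1) y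
  | Step.D :: p, x, y => noNAt ν h p (x+1) (y+1)

/-- Right contraction: replace a consecutive `EN` pair (a valley) by a `D` step. -/
def RightC (μ lam : List Step) : Prop :=
  ∃ p q, μ = p ++ Step.E :: Step.N :: q ∧ lam = p ++ Step.D :: q

/-- Left contraction: delete an `E` step together with the most recent preceding `N` step
whose initial point has the same `horizNu` statistic as the initial point of the `E` step,
shift the intermediate subpath, and place a `D` step at the initial point of the `N` step. -/
def LeftC (ν μ lam : List Step) : Prop :=
  ∃ p m q, μ = p ++ Step.N :: (m ++ Step.E :: q) ∧ lam = p ++ Step.D :: (m ++ q) ∧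
    horizNu ν (eLen p) (nLen p)
      = horizNu ν (eLen (p ++ Step.N :: m)) (nLen (p ++ Step.N :: m)) ∧
    noNAt ν (horizNu ν (eLen (p ++ Step.N :: m)) (nLen (p ++ Step.N :: m)))
      m (eLen p) (nLen p + 1)

/-- Diagonal contraction: delete an `E` step ending at the initial point `r` of a `D` step,
together with the most recent preceding `N` step whose initial point `s` satisfies
`horizNu s = horizNu r`, shift the intermediate subpath, and place a `D` step at `s`. -/
def DiagC (ν μ lam : List Step) : Prop :=
  ∃ p m q, μ = p ++ Step.N :: (m ++ Step.E :: Step.D :: q) ∧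
    lam = p ++ Step.D :: (m ++ Step.D :: q) ∧
    horizNu ν (eLen p) (nLen p)
      = horizNu ν (eLen (p ++ Step.N :: m) + 1) (nLen (p ++ Step.N :: m)) ∧
    noNAt ν (horizNu ν (eLen (p ++ Step.N :: m) + 1) (nLen (p ++ Step.N :: m)))
      m (eLen p) (nLen p + 1)

/-- Cover relation of the contraction poset of ν-Schröder paths. -/
def Covers (ν μ lam : List Step) : Prop :=
  IsSmallSchroder ν μ ∧ IsSmallSchroder ν lam ∧
    (RightC μ lam ∨ LeftC ν μ lam ∨ DiagC ν μ lam)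

/-- The Morse matching: `σ` (having a `D` step preceded by no valley) is matched with the
path `π` obtained by replacing the first such `D` step by `EN`. -/
def MorseM (ν : List Step) : Set (List Step × List Step) :=
  { z | ∃ p q, Step.D ∉ p ∧ valleys p = 0 ∧
      z.2 = p ++ Step.D :: q ∧ z.1 = p ++ Step.E :: Step.N :: q ∧ IsSmallSchroder ν z.2 }

/-- Twice the area between a small ν-Schröder path and `ν`. -/
def area2 (ν π : List Step) : ℕ :=
  ∑ x ∈ Finset.range (eLen ν), (colVal π x - colVal ν x)

/-- An `(I,J̄)`-forest: increasing, non-crossing arcs. -/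
def IsIJForest (I J : Finset ℕ) (F : Finset (ℕ × ℕ)) : Prop :=
  (∀ a ∈ F, a.1 ∈ I ∧ a.2 ∈ J ∧ a.1 < a.2) ∧
    (∀ a ∈ F, ∀ a' ∈ F, ¬(a.1 < a'.1 ∧ a'.1 < a.2 ∧ a.2 < a'.2))

/-- A covering `(I,J̄)`-forest: contains the arc `(1,n)` and has no isolated node. -/
def IsCoveringForest (n : ℕ) (I J : Finset ℕ) (F : Finset (ℕ × ℕ)) : Prop :=
  IsIJForest I J F ∧ (1, n) ∈ F ∧
    (∀ i ∈ I, ∃ a ∈ F, a.1 = i) ∧ (∀ j ∈ J, ∃ a ∈ F, a.2 = j)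

/-- The lattice path read off from the interleaving of `I` and `J̄` (elements `2,…,n-1`,
`E` for elements of `I`, `N` for the others). -/
def nuOf (n : ℕ) (I : Finset ℕ) : List Step :=
  (List.range' 2 (n - 2)).map (fun k => if k ∈ I then Step.E else Step.N)

namespace SchAux
open Step List

lemma length_eq_counts (l : List Step) :
    l.length = l.count Step.N + l.count Step.E + l.count Step.D := by
  induction l with
  | nil => simp
  | cons s t ih => cases s <;> simp [List.count_cons, ih] <;> ring

@[simp] lemma eLen_nil : eLen [] = 0 := rfl
@[simp] lemma nLen_nil : nLen [] = 0 := rfl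
@[simp] lemma eLen_cons_N (t) : eLen (Step.N :: t) = eLen t := by simp [eLen]
@[simp] lemma eLen_cons_E (t) : eLen (Step.E :: t) = eLen t + 1 := by
  simp [eLen, List.count_cons]; ring
@[simp] lemma eLen_cons_D (t) : eLen (Step.D :: t) = eLen t + 1 := by
  simp [eLen, List.count_cons]; ring
@[simp] lemma nLen_cons_N (t) : nLen (Step.N :: t) = nLen t + 1 := by
  simp [nLen, List.count_cons]; ring
@[simp] lemma nLen_cons_E (t) : nLen (Step.E :: t) = nLen t := by simp [nLen]
@[simp] lemma nLen_cons_D (t) : nLen (Step.D :: t) = nLen t + 1 := by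
  simp [nLen, List.count_cons]; ring

lemma eLen_append (u v : List Step) : eLen (u ++ v) = eLen u + eLen v := by
  simp [eLen, List.count_append]; ring
lemma nLen_append (u v : List Step) : nLen (u ++ v) = nLen u + nLen v := by
  simp [nLen, List.count_append]; ring

lemma eLen_le_of_prefix {t w : List Step} (h : t <+: w) : eLen t ≤ eLen w := by
  obtain ⟨r, rfl⟩ := h; simp [eLen_append]
lemma nLen_le_of_prefix {t w : List Step} (h : t <+: w) : nLen t ≤ nLen w := by
  obtain ⟨r, rfl⟩ := h; simp [nLen_append]

@[simp] lemma colVal_nil (x) : colVal [] x = 0 := rfl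
@[simp] lemma colVal_cons_N (p x) : colVal (Step.N :: p) x = colVal p x + 2 := rfl
@[simp] lemma colVal_cons_E_zero (p) : colVal (Step.E :: p) 0 = 0 := rfl
@[simp] lemma colVal_cons_E_succ (p x) : colVal (Step.E :: p) (x+1) = colVal p x := rfl
@[simp] lemma colVal_cons_D_zero (p) : colVal (Step.D :: p) 0 = 1 := rfl
@[simp] lemma colVal_cons_D_succ (p x) : colVal (Step.D :: p) (x+1) = colVal p x + 2 := rfl

/-- colVal at a column equals twice the height before the crossing step plus diag flag. -/
lemma colVal_split (t : List Step) (s : Step) (r : List Step) (hs : s ≠ Step.N) :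
    colVal (t ++ s :: r) (eLen t) = 2 * nLen t + (if s = Step.D then 1 else 0) := by
  induction t with
  | nil =>
    cases s with
    | N => exact absurd rfl hs
    | E => simp
    | D => simp
  | cons c t ih =>
    cases c <;> simp [ih] <;> omega

lemma exists_split (π : List Step) (x : ℕ) (hx : x < eLen π) :
    ∃ t s r, π = t ++ s :: r ∧ s ≠ Step.N ∧ eLen t = x := by
  induction π generalizing x with
  | nil => simp at hx
  | cons c p ih =>
    cases c with
    | N =>
      obtain ⟨t, s, r, h1, h2, h3⟩ := ih x (by simpa using hx)
      exact ⟨Step.N :: t, s, r, by simp [h1], h2, by simp [h3]⟩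
    | E =>
      cases x with
      | zero => exact ⟨[], Step.E, p, rfl, by simp, rfl⟩
      | succ x =>
        obtain ⟨t, s, r, h1, h2, h3⟩ := ih x (by simp at hx; omega)
        exact ⟨Step.E :: t, s, r, by simp [h1], h2, by simp [h3]⟩
    | D =>
      cases x with
      | zero => exact ⟨[], Step.D, p, rfl, by simp, rfl⟩
      | succ x =>
        obtain ⟨t, s, r, h1, h2, h3⟩ := ih x (by simp at hx; omega)
        exact ⟨Step.D :: t, s, r, by simp [h1], h2, by simp [h3]⟩

lemma colVal_of_eLen_le (p : List Step) (x : ℕ) (h : eLen p ≤ x) :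
    colVal p x = 2 * nLen p := by
  induction p generalizing x with
  | nil => simp
  | cons c p ih =>
    cases c with
    | N => simp at h ⊢; rw [ih x h]; ring
    | E =>
      cases x with
      | zero => simp at h
      | succ x => simp at h ⊢; rw [ih x h]
    | D =>
      cases x with
      | zero => simp at h
      | succ x => simp at h ⊢; rw [ih x h]; ring

end SchAux
namespace SchAux
open Step List

def blocks (ms : List ℕ) : List Step :=
  ms.flatMap (fun m => List.replicate m Step.N ++ [Step.E])

lemma nuAB_eq_blocks (a b : ℕ) :
    nuAB a b = blocks ((List.range b).map (fun x => ((x+1)*a + b - 1)/b - (x*a + b - 1)/b)) := by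
  simp [nuAB, blocks, List.flatMap_map]

@[simp] lemma blocks_nil : blocks [] = [] := rfl
@[simp] lemma blocks_cons (m ms) :
    blocks (m :: ms) = List.replicate m Step.N ++ Step.E :: blocks ms := by
  simp [blocks]

lemma eLen_replicate_N (k : ℕ) : eLen (List.replicate k Step.N) = 0 := by
  simp [eLen, List.count_replicate]
lemma nLen_replicate_N (k : ℕ) : nLen (List.replicate k Step.N) = k := by
  simp [nLen, List.count_replicate]

lemma eLen_blocks (ms : List ℕ) : eLen (blocks ms) = ms.length := by
  induction ms with
  | nil => simp
  | cons m ms ih => simp [eLen_append, eLen_replicate_N, ih]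
lemma nLen_blocks (ms : List ℕ) : nLen (blocks ms) = ms.sum := by
  induction ms with
  | nil => simp
  | cons m ms ih => simp [nLen_append, nLen_replicate_N, ih]

@[simp] lemma cutPeaks_nil : cutPeaks [] = [] := rfl
lemma cutPeaks_NE (p) : cutPeaks (Step.N :: Step.E :: p) = Step.D :: cutPeaks p := rfl
lemma cutPeaks_E (p) : cutPeaks (Step.E :: p) = Step.E :: cutPeaks p := by
  cases p <;> rfl
lemma cutPeaks_D (p) : cutPeaks (Step.D :: p) = Step.D :: cutPeaks p := by
  cases p <;> rfl
lemma cutPeaks_NN (p) : cutPeaks (Step.N :: Step.N :: p) = Step.N :: cutPeaks (Step.N :: p) := rfl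

lemma cutPeaks_replicate (m : ℕ) (l : List Step) :
    cutPeaks (List.replicate (m+1) Step.N ++ Step.E :: l)
      = List.replicate m Step.N ++ Step.D :: cutPeaks l := by
  induction m with
  | zero => simp [cutPeaks_NE]
  | succ m ih =>
    have e1 : List.replicate (m+2) Step.N ++ Step.E :: l
        = Step.N :: Step.N :: (List.replicate m Step.N ++ Step.E :: l) := by
      simp [List.replicate_succ]
    have e2 : Step.N :: (List.replicate m Step.N ++ Step.E :: l)
        = List.replicate (m+1) Step.N ++ Step.E :: l := by
      simp [List.replicate_succ]
    rw [e1, cutPeaks_NN, e2, ih]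
    simp [List.replicate_succ]

lemma cutPeaks_blocks_cons (m : ℕ) (ms : List ℕ) :
    cutPeaks (blocks (m :: ms))
      = (if m = 0 then [Step.E] else List.replicate (m-1) Step.N ++ [Step.D])
          ++ cutPeaks (blocks ms) := by
  cases m with
  | zero => simp [cutPeaks_E]
  | succ m => simp [cutPeaks_replicate]

lemma eLen_cutPeaks_blocks (ms : List ℕ) : eLen (cutPeaks (blocks ms)) = ms.length := by
  induction ms with
  | nil => simp
  | cons m ms ih =>
    rw [cutPeaks_blocks_cons, eLen_append, ih]
    split <;> simp [eLen_append, eLen_replicate_N, eLen, List.count_replicate] <;> omega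

lemma nLen_cutPeaks_blocks (ms : List ℕ) : nLen (cutPeaks (blocks ms)) = ms.sum := by
  induction ms with
  | nil => simp
  | cons m ms ih =>
    rw [cutPeaks_blocks_cons, nLen_append, ih]
    split
    · simp [nLen]; omega
    · simp [nLen_append, nLen_replicate_N, nLen, List.count_replicate]; omega

lemma colVal_replicate_N (k : ℕ) (l : List Step) (x : ℕ) :
    colVal (List.replicate k Step.N ++ l) x = 2 * k + colVal l x := by
  induction k with
  | zero => simp
  | succ k ih => simp [List.replicate_succ, ih]; ring

lemma colVal_cp_zero (m : ℕ) (ms : List ℕ) :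
    colVal (cutPeaks (blocks (m :: ms))) 0 = 2 * m - (if m = 0 then 0 else 1) := by
  rw [cutPeaks_blocks_cons]
  cases m with
  | zero => simp
  | succ m => simp [colVal_replicate_N]; omega

lemma colVal_cp_succ (m : ℕ) (ms : List ℕ) (x : ℕ) :
    colVal (cutPeaks (blocks (m :: ms))) (x+1) = 2 * m + colVal (cutPeaks (blocks ms)) x := by
  rw [cutPeaks_blocks_cons]
  cases m with
  | zero => simp
  | succ m => simp [colVal_replicate_N]; omega

lemma getD_le_take_sum (ms : List ℕ) (x : ℕ) : (ms[x]?).getD 0 ≤ (ms.take (x+1)).sum := by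
  induction ms generalizing x with
  | nil => simp
  | cons m ms ih =>
    cases x with
    | zero => simp
    | succ x => simp; have := ih x; omega

lemma colVal_cp_formula (ms : List ℕ) (x : ℕ) (hx : x < ms.length) :
    colVal (cutPeaks (blocks ms)) x
      = 2 * (ms.take (x+1)).sum - (if (ms[x]?).getD 0 = 0 then 0 else 1) := by
  induction ms generalizing x with
  | nil => simp at hx
  | cons m ms ih =>
    cases x with
    | zero => simpa using colVal_cp_zero m ms
    | succ x =>
      rw [colVal_cp_succ, ih x (by simpa using hx)]
      have h1 := getD_le_take_sum ms x
      simp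
      split_ifs <;> omega

end SchAux
namespace SchAux
open Step List

def cfn (a b x : ℕ) : ℕ := (x*a + b - 1)/b

lemma cfn_le_iff (a b : ℕ) (hb : 0 < b) (x y : ℕ) : cfn a b x ≤ y ↔ a * x ≤ b * y := by
  unfold cfn
  rw [Nat.div_le_iff_le_mul_add_pred hb, mul_comm x a, mul_comm b y]
  generalize a * x = P
  generalize y * b = Q
  omega

lemma cfn_zero (a b : ℕ) (hb : 0 < b) : cfn a b 0 = 0 := by
  unfold cfn
  apply Nat.div_eq_of_lt
  omega

lemma cfn_mono (a b x : ℕ) : cfn a b x ≤ cfn a b (x+1) := by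
  apply Nat.div_le_div_right
  have : x * a ≤ (x+1) * a := Nat.mul_le_mul_right a (by omega)
  omega

lemma cfn_b (a b : ℕ) (ha : 0 < a) (hb : 0 < b) : cfn a b b = a := by
  have h1 : cfn a b b ≤ a := (cfn_le_iff a b hb b a).mpr (by rw [mul_comm])
  have h2 : a ≤ cfn a b b := by
    by_contra h
    push_neg at h
    have h3 : cfn a b b ≤ a - 1 := by omega
    have h4 := (cfn_le_iff a b hb b (a-1)).mp h3
    obtain ⟨a', rfl⟩ : ∃ a', a = a' + 1 := ⟨a - 1, by omega⟩
    simp [Nat.add_mul, Nat.mul_sub_one, Nat.succ_mul, mul_comm a' b] at h4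
    omega
  omega

def msAB (a b : ℕ) : List ℕ := (List.range b).map (fun x => cfn a b (x+1) - cfn a b x)

lemma nuAB_eq (a b : ℕ) : nuAB a b = blocks (msAB a b) := by
  rw [nuAB_eq_blocks]; rfl

lemma length_msAB (a b : ℕ) : (msAB a b).length = b := by simp [msAB]

lemma sum_take_msAB (a b : ℕ) (hb : 0 < b) (k : ℕ) (hk : k ≤ b) :
    ((msAB a b).take k).sum = cfn a b k := by
  unfold msAB
  rw [← List.map_take, List.take_range]
  have : min k b = k := by omega
  rw [this]
  clear this hk
  induction k with
  | zero => simp [cfn_zero a b hb]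
  | succ k ih =>
    rw [List.range_succ]
    simp only [List.map_append, List.sum_append, ih]
    have := cfn_mono a b k
    simp
    omega

lemma getD_msAB (a b x : ℕ) (hx : x < b) :
    ((msAB a b)[x]?).getD 0 = cfn a b (x+1) - cfn a b x := by
  unfold msAB
  simp [List.getElem?_map, List.getElem?_range, hx]

lemma eLen_nuAB (a b : ℕ) : eLen (nuAB a b) = b := by
  rw [nuAB_eq, eLen_blocks, length_msAB]

lemma nLen_nuAB (a b : ℕ) (ha : 0 < a) (hb : 0 < b) : nLen (nuAB a b) = a := by
  rw [nuAB_eq, nLen_blocks, ← List.take_length (l := msAB a b)]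
  rw [length_msAB, sum_take_msAB a b hb b le_rfl, cfn_b a b ha hb]

lemma colVal_cp_nuAB (a b : ℕ) (ha : 0 < a) (hb : 0 < b) (x : ℕ) (hx : x < b) :
    colVal (cutPeaks (nuAB a b)) x
      = 2 * cfn a b (x+1) - (if cfn a b (x+1) = cfn a b x then 0 else 1) := by
  rw [nuAB_eq, colVal_cp_formula _ x (by rw [length_msAB]; exact hx)]
  rw [sum_take_msAB a b hb (x+1) (by omega), getD_msAB a b x hx]
  have := cfn_mono a b x
  split_ifs <;> omega

lemma colVal_cp_nuAB_ge (a b : ℕ) (ha : 0 < a) (hb : 0 < b) (x : ℕ) (hx : b ≤ x) :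
    colVal (cutPeaks (nuAB a b)) x = 2 * a := by
  rw [nuAB_eq, colVal_of_eLen_le _ x (by rw [eLen_cutPeaks_blocks, length_msAB]; exact hx)]
  rw [nLen_cutPeaks_blocks, ← List.take_length (l := msAB a b), length_msAB,
    sum_take_msAB a b hb b le_rfl, cfn_b a b ha hb]

lemma weaklyAbove_iff (a b : ℕ) (ha : 0 < a) (hb : 0 < b) (π : List Step)
    (he : eLen π = b) (hn : nLen π = a) :
    WeaklyAbove π (cutPeaks (nuAB a b)) ↔ ∀ t, t <+: π → a * eLen t ≤ b * nLen t := by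
  constructor
  · intro h t ht
    rcases Nat.eq_zero_or_pos (eLen t) with h0 | h0
    · simp [h0]
    obtain ⟨x', hx'⟩ : ∃ x', eLen t = x' + 1 := ⟨eLen t - 1, by omega⟩
    obtain ⟨t', s, r, rfl, hs, het'⟩ := exists_split t x' (by omega)
    obtain ⟨u, hu⟩ := ht
    have hπ : π = t' ++ s :: (r ++ u) := by rw [← hu]; simp
    have hcv : colVal π x' = 2 * nLen t' + (if s = Step.D then 1 else 0) := by
      rw [hπ, ← het']; exact colVal_split t' s (r ++ u) hs
    have hxb : x' < b := by
      have : eLen (t' ++ s :: r) ≤ eLen π := eLen_le_of_prefix ⟨u, hu⟩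
      omega
    have hlow := h x'
    rw [colVal_cp_nuAB a b ha hb x' hxb, hcv] at hlow
    have hmono := cfn_mono a b x'
    have key : cfn a b (x'+1) ≤ nLen (t' ++ s :: r) := by
      rw [nLen_append]
      cases s with
      | N => exact absurd rfl hs
      | E => simp at hlow ⊢; split_ifs at hlow <;> omega
      | D => simp at hlow ⊢; split_ifs at hlow <;> omega
    rw [hx']
    exact (cfn_le_iff a b hb (x'+1) _).mp key
  · intro h x
    by_cases hx : x < b
    · obtain ⟨t, s, r, hπ, hs, het⟩ := exists_split π x (by omega)
      have h1 : a * eLen t ≤ b * nLen t := h t ⟨s :: r, hπ.symm⟩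
      have h2 : a * eLen (t ++ [s]) ≤ b * nLen (t ++ [s]) :=
        h (t ++ [s]) ⟨r, by rw [hπ]; simp⟩
      rw [← cfn_le_iff a b hb] at h1 h2
      rw [het] at h1
      rw [eLen_append, nLen_append, het] at h2
      have hcv : colVal π x = 2 * nLen t + (if s = Step.D then 1 else 0) := by
        rw [hπ, ← het]; exact colVal_split t s r hs
      rw [colVal_cp_nuAB a b ha hb x hx, hcv]
      have := cfn_mono a b x
      cases s with
      | N => exact absurd rfl hs
      | E => simp at h2 ⊢; split_ifs <;> omega
      | D => simp at h2 ⊢; split_ifs <;> omega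
    · rw [colVal_cp_nuAB_ge a b ha hb x (by omega),
        colVal_of_eLen_le π x (by omega), hn]

end SchAux
namespace SchAux
open Step List

def wordsF : ℕ → ℕ → ℕ → ℕ → Finset (List Step)
  | 0, p, q, r => if p = 0 ∧ q = 0 ∧ r = 0 then {[]} else ∅
  | n+1, p, q, r =>
      (if 0 < p then (wordsF n (p-1) q r).image (Step.N :: ·) else ∅) ∪
      (if 0 < q then (wordsF n p (q-1) r).image (Step.E :: ·) else ∅) ∪
      (if 0 < r then (wordsF n p q (r-1)).image (Step.D :: ·) else ∅)

lemma mem_wordsF (n p q r : ℕ) (l : List Step) :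
    l ∈ wordsF n p q r ↔
      l.length = n ∧ l.count Step.N = p ∧ l.count Step.E = q ∧ l.count Step.D = r := by
  induction n generalizing p q r l with
  | zero =>
    simp only [wordsF]
    split_ifs with h
    · obtain ⟨rfl, rfl, rfl⟩ := h
      cases l <;> simp
    · simp only [Finset.notMem_empty, false_iff]
      rintro ⟨hl, rfl, rfl, rfl⟩
      rw [List.length_eq_zero_iff] at hl
      subst hl
      simp at h
  | succ n ih =>
    simp only [wordsF, Finset.mem_union]
    constructor
    · rintro ((h | h) | h) <;> split_ifs at h with hpos
      all_goals try exact absurd h (Finset.notMem_empty _)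
      all_goals
        simp only [Finset.mem_image] at h
        obtain ⟨u, hu, rfl⟩ := h
        obtain ⟨h1, h2, h3, h4⟩ := (ih _ _ _ u).mp hu
        simp [List.count_cons, h1, h2, h3, h4]
        omega
    · rintro ⟨h1, h2, h3, h4⟩
      cases l with
      | nil => simp at h1
      | cons s t =>
        cases s with
        | N =>
          simp [List.count_cons] at h1 h2 h3 h4
          refine Or.inl (Or.inl ?_)
          rw [if_pos (show 0 < p by omega)]
          simp only [Finset.mem_image]
          exact ⟨t, (ih _ _ _ t).mpr ⟨h1, by omega, h3, h4⟩, rfl⟩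
        | E =>
          simp [List.count_cons] at h1 h2 h3 h4
          refine Or.inl (Or.inr ?_)
          rw [if_pos (show 0 < q by omega)]
          simp only [Finset.mem_image]
          exact ⟨t, (ih _ _ _ t).mpr ⟨h1, h2, by omega, h4⟩, rfl⟩
        | D =>
          simp [List.count_cons] at h1 h2 h3 h4
          refine Or.inr ?_
          rw [if_pos (show 0 < r by omega)]
          simp only [Finset.mem_image]
          exact ⟨t, (ih _ _ _ t).mpr ⟨h1, h2, h3, by omega⟩, rfl⟩

lemma wordsF_card : ∀ n p q r : ℕ, n = p + q + r →
    p.factorial * q.factorial * r.factorial * (wordsF n p q r).card = n.factorial := by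
  intro n
  induction n with
  | zero =>
    intro p q r h
    have : p = 0 ∧ q = 0 ∧ r = 0 := by omega
    obtain ⟨rfl, rfl, rfl⟩ := this
    simp [wordsF]
  | succ n ih =>
    intro p q r h
    have hcard : ∀ (s : Step) (p' q' r' : ℕ),
        ((wordsF n p' q' r').image (s :: ·)).card = (wordsF n p' q' r').card := by
      intro s p' q' r'
      exact Finset.card_image_of_injective _ (fun x y hxy => by simpa using hxy)
    have hsub : ∀ (c : Prop) (inst : Decidable c) (X : Finset (List Step)),
        (if c then X else ∅) ⊆ X := by
      intro c inst X; split_ifs <;> simp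
    have hdisj : ∀ (s s' : Step), s ≠ s' → ∀ (S T : Finset (List Step)),
        Disjoint (S.image (s :: ·)) (T.image (s' :: ·)) := by
      intro s s' hss S T
      rw [Finset.disjoint_left]
      rintro l hl1 hl2
      simp only [Finset.mem_image] at hl1 hl2
      obtain ⟨u, _, rfl⟩ := hl1
      obtain ⟨v, _, hv⟩ := hl2
      injection hv with h1 _
      exact hss h1.symm
    have hd1 : Disjoint
        (if 0 < p then (wordsF n (p-1) q r).image (Step.N :: ·) else ∅)
        (if 0 < q then (wordsF n p (q-1) r).image (Step.E :: ·) else ∅) :=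
      (hdisj Step.N Step.E (by simp) _ _).mono (hsub _ _ _) (hsub _ _ _)
    have hd2 : Disjoint
        ((if 0 < p then (wordsF n (p-1) q r).image (Step.N :: ·) else ∅) ∪
         (if 0 < q then (wordsF n p (q-1) r).image (Step.E :: ·) else ∅))
        (if 0 < r then (wordsF n p q (r-1)).image (Step.D :: ·) else ∅) := by
      rw [Finset.disjoint_union_left]
      exact ⟨(hdisj Step.N Step.D (by simp) _ _).mono (hsub _ _ _) (hsub _ _ _),
             (hdisj Step.E Step.D (by simp) _ _).mono (hsub _ _ _) (hsub _ _ _)⟩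
    rw [show wordsF (n+1) p q r =
      (if 0 < p then (wordsF n (p-1) q r).image (Step.N :: ·) else ∅) ∪
      (if 0 < q then (wordsF n p (q-1) r).image (Step.E :: ·) else ∅) ∪
      (if 0 < r then (wordsF n p q (r-1)).image (Step.D :: ·) else ∅) from rfl]
    rw [Finset.card_union_of_disjoint hd2, Finset.card_union_of_disjoint hd1]
    have e1 : (if 0 < p then (wordsF n (p-1) q r).image (Step.N :: ·) else ∅).card
        = if 0 < p then (wordsF n (p-1) q r).card else 0 := by
      split_ifs <;> simp [hcard]
    have e2 : (if 0 < q then (wordsF n p (q-1) r).image (Step.E :: ·) else ∅).card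
        = if 0 < q then (wordsF n p (q-1) r).card else 0 := by
      split_ifs <;> simp [hcard]
    have e3 : (if 0 < r then (wordsF n p q (r-1)).image (Step.D :: ·) else ∅).card
        = if 0 < r then (wordsF n p q (r-1)).card else 0 := by
      split_ifs <;> simp [hcard]
    rw [e1, e2, e3]
    have key1 : 0 < p → p.factorial * q.factorial * r.factorial * (wordsF n (p-1) q r).card
        = p * n.factorial := by
      intro hp
      have := ih (p-1) q r (by omega)
      calc p.factorial * q.factorial * r.factorial * (wordsF n (p-1) q r).card
          = p * ((p-1).factorial * q.factorial * r.factorial * (wordsF n (p-1) q r).card) := by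
            rw [show p.factorial = p * (p-1).factorial by
              conv_lhs => rw [show p = (p-1)+1 by omega]
              rw [Nat.factorial_succ]; congr 1; omega]
            ring
        _ = p * n.factorial := by rw [this]
    have key2 : 0 < q → p.factorial * q.factorial * r.factorial * (wordsF n p (q-1) r).card
        = q * n.factorial := by
      intro hq
      have := ih p (q-1) r (by omega)
      calc p.factorial * q.factorial * r.factorial * (wordsF n p (q-1) r).card
          = q * (p.factorial * (q-1).factorial * r.factorial * (wordsF n p (q-1) r).card) := by
            rw [show q.factorial = q * (q-1).factorial by
              conv_lhs => rw [show q = (q-1)+1 by omega]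
              rw [Nat.factorial_succ]; congr 1; omega]
            ring
        _ = q * n.factorial := by rw [this]
    have key3 : 0 < r → p.factorial * q.factorial * r.factorial * (wordsF n p q (r-1)).card
        = r * n.factorial := by
      intro hr
      have := ih p q (r-1) (by omega)
      calc p.factorial * q.factorial * r.factorial * (wordsF n p q (r-1)).card
          = r * (p.factorial * q.factorial * (r-1).factorial * (wordsF n p q (r-1)).card) := by
            rw [show r.factorial = r * (r-1).factorial by
              conv_lhs => rw [show r = (r-1)+1 by omega]
              rw [Nat.factorial_succ]; congr 1; omega]
            ring
        _ = r * n.factorial := by rw [this]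
    rw [Nat.factorial_succ, h, Nat.mul_add, Nat.mul_add, Nat.add_mul, Nat.add_mul]
    have g1 : p.factorial * q.factorial * r.factorial *
        (if 0 < p then (wordsF n (p-1) q r).card else 0) = p * n.factorial := by
      split_ifs with hp
      · exact key1 hp
      · have : p = 0 := by omega
        simp [this]
    have g2 : p.factorial * q.factorial * r.factorial *
        (if 0 < q then (wordsF n p (q-1) r).card else 0) = q * n.factorial := by
      split_ifs with hq
      · exact key2 hq
      · have : q = 0 := by omega
        simp [this]
    have g3 : p.factorial * q.factorial * r.factorial *
        (if 0 < r then (wordsF n p q (r-1)).card else 0) = r * n.factorial := by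
      split_ifs with hr
      · exact key3 hr
      · have : r = 0 := by omega
        simp [this]
    rw [g1, g2, g3]

end SchAux
namespace SchAux
open Step List

def SZ (a b : ℕ) (w : List Step) : ℤ := (b:ℤ) * nLen w - (a:ℤ) * eLen w

@[simp] lemma SZ_nil (a b : ℕ) : SZ a b [] = 0 := by simp [SZ]

lemma SZ_append (a b : ℕ) (u v : List Step) : SZ a b (u ++ v) = SZ a b u + SZ a b v := by
  simp [SZ, eLen_append, nLen_append]; push_cast; ring

def AboveW (a b : ℕ) (w : List Step) : Prop := ∀ t, t <+: w → a * eLen t ≤ b * nLen t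

lemma aboveW_iff_SZ (a b : ℕ) (w : List Step) :
    AboveW a b w ↔ ∀ k, 0 ≤ SZ a b (w.take k) := by
  constructor
  · intro h k
    have := h (w.take k) (List.take_prefix k w)
    simp [SZ]
    exact_mod_cast this
  · intro h t ht
    obtain ⟨u, rfl⟩ := ht
    have := h t.length
    rw [List.take_append_of_le_length le_rfl, List.take_length] at this
    simp [SZ] at this
    exact_mod_cast this

/-- Membership facts for words in the counting finset. -/
lemma WF_facts (a b i n : ℕ) (hia : i ≤ a) (hib : i ≤ b) (hn : n = a + b - i)
    (w : List Step) (hw : w ∈ wordsF n (a-i) (b-i) i) :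
    w.length = n ∧ eLen w = b ∧ nLen w = a ∧ SZ a b w = 0 := by
  obtain ⟨h1, h2, h3, h4⟩ := (mem_wordsF n (a-i) (b-i) i w).mp hw
  have he : eLen w = b := by simp [eLen, h3, h4]; omega
  have hnn : nLen w = a := by simp [nLen, h2, h4]; omega
  refine ⟨h1, he, hnn, ?_⟩
  simp [SZ, he, hnn]; ring

lemma counts_take_le (w t : List Step) (h : t <+: w) (s : Step) :
    t.count s ≤ w.count s := by
  exact h.sublist.count_le s

/-- Distinct prefix sums (uses coprimality). -/
lemma SZ_take_inj (a b i n : ℕ) (ha : 0 < a) (hb : 0 < b) (hco : Nat.Coprime a b)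
    (hia : i ≤ a) (hib : i ≤ b) (hn : n = a + b - i)
    (w : List Step) (hw : w ∈ wordsF n (a-i) (b-i) i)
    (k k' : ℕ) (hk : k < k') (hk' : k' < n) :
    SZ a b (w.take k) ≠ SZ a b (w.take k') := by
  obtain ⟨hlen, hew, hnw, hSw⟩ := WF_facts a b i n hia hib hn w hw
  obtain ⟨hl1, hc1, hc2, hc3⟩ := (mem_wordsF n (a-i) (b-i) i w).mp hw
  intro hEq
  set t := w.take k with htdef
  set t' := w.take k' with ht'def
  have htt : t = t'.take k := by
    rw [htdef, ht'def, List.take_take, min_eq_left (by omega)]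
  have hmid : t' = t ++ (t'.drop k) := by
    rw [htt, List.take_append_drop]
  set mid := t'.drop k with hmiddef
  have hSmid : SZ a b mid = 0 := by
    have := SZ_append a b t mid
    rw [← hmid, ← hEq] at this
    omega
  have hlt' : t'.length = k' := by rw [ht'def, List.length_take]; omega
  have hlt : t.length = k := by rw [htdef, List.length_take]; omega
  have hlmid : mid.length = k' - k := by
    rw [hmiddef, List.length_drop, hlt']
  have hprefix : t' <+: w := List.take_prefix k' w
  have htpre : t <+: t' := by rw [hmid]; exact ⟨mid, rfl⟩
  -- SZ mid = 0 gives b * nLen mid = a * eLen mid in ℕ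
  have hnat : b * nLen mid = a * eLen mid := by
    unfold SZ at hSmid
    rw [sub_eq_zero] at hSmid
    exact_mod_cast hSmid
  have hdvd : b ∣ eLen mid := by
    have : b ∣ a * eLen mid := ⟨nLen mid, hnat.symm⟩
    exact (Nat.Coprime.dvd_of_dvd_mul_left hco.symm this)
  have hele : eLen mid ≤ b := by
    have h1 : eLen t' ≤ eLen w := eLen_le_of_prefix hprefix
    have h2 : eLen t' = eLen t + eLen mid := by rw [hmid, eLen_append]
    omega
  rcases Nat.eq_zero_or_pos (eLen mid) with hz | hpos
  · have hnz : nLen mid = 0 := by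
      rw [hz, Nat.mul_zero] at hnat
      exact Nat.mul_eq_zero.mp hnat |>.resolve_left (by omega)
    have : mid.length = 0 := by
      have := length_eq_counts mid
      simp [eLen] at hz
      simp [nLen] at hnz
      omega
    omega
  · have heb : eLen mid = b := le_antisymm hele (Nat.le_of_dvd hpos hdvd)
    have hnmid : nLen mid = a := by
      rw [heb, mul_comm a b] at hnat
      exact Nat.eq_of_mul_eq_mul_left hb hnat
    have het : eLen t = 0 := by
      have h1 : eLen t' ≤ eLen w := eLen_le_of_prefix hprefix
      have h2 : eLen t' = eLen t + eLen mid := by rw [hmid, eLen_append]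
      omega
    have hnt : nLen t = 0 := by
      have h1 : nLen t' ≤ nLen w := nLen_le_of_prefix hprefix
      have h2 : nLen t' = nLen t + nLen mid := by rw [hmid, nLen_append]
      omega
    have hlen0 : t.length = 0 := by
      have := length_eq_counts t
      simp [eLen] at het
      simp [nLen] at hnt
      omega
    -- so t' has eLen b, nLen a, hence full counts, length n
    have het' : eLen t' = b := by rw [hmid, eLen_append]; omega
    have hnt' : nLen t' = a := by rw [hmid, nLen_append]; omega
    have hcd : t'.count Step.D ≤ i := by
      have := counts_take_le w t' hprefix Step.D
      omega
    have hce : t'.count Step.E ≤ b - i := by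
      have := counts_take_le w t' hprefix Step.E
      omega
    have hcn : t'.count Step.N ≤ a - i := by
      have := counts_take_le w t' hprefix Step.N
      omega
    have hfull : t'.length = n := by
      have hL := length_eq_counts t'
      simp [eLen] at het'
      simp [nLen] at hnt'
      omega
    omega

noncomputable def minIdx (a b n : ℕ) (w : List Step) : ℕ :=
  if h : ∃ k ∈ Finset.range n, ∀ k' ∈ Finset.range n,
      SZ a b (w.take k) ≤ SZ a b (w.take k') then h.choose else 0

lemma minIdx_spec (a b n : ℕ) (hn : 0 < n) (w : List Step) :
    minIdx a b n w ∈ Finset.range n ∧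
      ∀ k' ∈ Finset.range n, SZ a b (w.take (minIdx a b n w)) ≤ SZ a b (w.take k') := by
  have hne : (Finset.range n).Nonempty := ⟨0, by simp [hn]⟩
  obtain ⟨k, hk, hmin⟩ :=
    Finset.exists_min_image (Finset.range n) (fun k => SZ a b (w.take k)) hne
  have h : ∃ k ∈ Finset.range n, ∀ k' ∈ Finset.range n,
      SZ a b (w.take k) ≤ SZ a b (w.take k') := ⟨k, hk, hmin⟩
  rw [minIdx, dif_pos h]
  exact ⟨h.choose_spec.1, h.choose_spec.2⟩

lemma SZ_take_rotate (a b : ℕ) (w : List Step) (n : ℕ) (hlen : w.length = n)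
    (hw0 : SZ a b w = 0) (j k : ℕ) (hj : j ≤ n) (hk : k ≤ n) :
    SZ a b ((w.rotate j).take k)
      = SZ a b (w.take (if k ≤ n - j then j + k else k - (n - j))) - SZ a b (w.take j) := by
  rw [List.rotate_eq_drop_append_take (by omega)]
  have hdlen : (w.drop j).length = n - j := by simp [hlen]
  have hsplit : w.take j ++ w.drop j = w := List.take_append_drop j w
  have hSdrop : SZ a b (w.drop j) = - SZ a b (w.take j) := by
    have := SZ_append a b (w.take j) (w.drop j)
    rw [hsplit, hw0] at this
    omega
  by_cases hkj : k ≤ n - j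
  · rw [if_pos hkj]
    rw [List.take_append_of_le_length (by omega)]
    have : w.take (j + k) = w.take j ++ (w.drop j).take k := List.take_add (l := w) (i := j) (j := k)
    rw [this, SZ_append]
    ring
  · rw [if_neg hkj]
    rw [List.take_append]
    rw [List.take_of_length_le (by omega), hdlen]
    rw [List.take_take, min_eq_left (by omega)]
    rw [SZ_append, hSdrop]
    ring

lemma rotate_mem_WF (a b i n : ℕ) (w : List Step) (hw : w ∈ wordsF n (a-i) (b-i) i)
    (j : ℕ) : w.rotate j ∈ wordsF n (a-i) (b-i) i := by
  obtain ⟨h1, h2, h3, h4⟩ := (mem_wordsF n (a-i) (b-i) i w).mp hw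
  refine (mem_wordsF n (a-i) (b-i) i _).mpr ⟨?_, ?_, ?_, ?_⟩
  · rw [List.length_rotate]; exact h1
  · rw [(w.rotate_perm j).count_eq]; exact h2
  · rw [(w.rotate_perm j).count_eq]; exact h3
  · rw [(w.rotate_perm j).count_eq]; exact h4

lemma good_iff_minIdx (a b i n : ℕ) (ha : 0 < a) (hb : 0 < b) (hco : Nat.Coprime a b)
    (hia : i ≤ a) (hib : i ≤ b) (hn : n = a + b - i)
    (w : List Step) (hw : w ∈ wordsF n (a-i) (b-i) i) :
    AboveW a b w ↔ minIdx a b n w = 0 := by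
  have hnpos : 0 < n := by omega
  obtain ⟨hlen, hew, hnw, hSw⟩ := WF_facts a b i n hia hib hn w hw
  obtain ⟨hmem, hmin⟩ := minIdx_spec a b n hnpos w
  rw [aboveW_iff_SZ]
  constructor
  · intro h
    by_contra hne
    have h1 : SZ a b (w.take (minIdx a b n w)) ≤ SZ a b (w.take 0) :=
      hmin 0 (by simp [hnpos])
    have h2 : 0 ≤ SZ a b (w.take (minIdx a b n w)) := h _
    have h3 : SZ a b (w.take 0) = 0 := by simp
    have heq : SZ a b (w.take 0) = SZ a b (w.take (minIdx a b n w)) := by omega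
    exact SZ_take_inj a b i n ha hb hco hia hib hn w hw 0 (minIdx a b n w)
      (by omega) (by simpa using hmem) heq
  · intro h0 k
    by_cases hk : k < n
    · have := hmin k (by simp [hk])
      rw [h0] at this
      simpa using this
    · rw [List.take_of_length_le (by omega)]
      omega

lemma good_rotate_minIdx (a b i n : ℕ) (ha : 0 < a) (hb : 0 < b)
    (hia : i ≤ a) (hib : i ≤ b) (hn : n = a + b - i)
    (w : List Step) (hw : w ∈ wordsF n (a-i) (b-i) i) :
    AboveW a b (w.rotate (minIdx a b n w)) := by
  have hnpos : 0 < n := by omega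
  obtain ⟨hlen, hew, hnw, hSw⟩ := WF_facts a b i n hia hib hn w hw
  obtain ⟨hmem, hmin⟩ := minIdx_spec a b n hnpos w
  set j := minIdx a b n w with hj
  have hjn : j < n := by simpa using hmem
  rw [aboveW_iff_SZ]
  intro k
  by_cases hk : k ≤ n
  · rw [SZ_take_rotate a b w n hlen hSw j k (by omega) hk]
    set m := if k ≤ n - j then j + k else k - (n - j) with hm
    have hmle : m ≤ n := by rw [hm]; split_ifs <;> omega
    rcases Nat.lt_or_ge m n with hmlt | hmge
    · have := hmin m (by simp [hmlt])
      omega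
    · have hmn : m = n := by omega
      rw [hmn, List.take_of_length_le (by omega), hSw]
      have := hmin 0 (by simp [hnpos])
      simp at this
      omega
  · rw [List.take_of_length_le (by rw [List.length_rotate]; omega)]
    obtain ⟨_, _, _, hS⟩ := WF_facts a b i n hia hib hn _ (rotate_mem_WF a b i n w hw j)
    omega

lemma minIdx_rotate (a b i n : ℕ) (ha : 0 < a) (hb : 0 < b) (hco : Nat.Coprime a b)
    (hia : i ≤ a) (hib : i ≤ b) (hn : n = a + b - i)
    (g : List Step) (hg : g ∈ wordsF n (a-i) (b-i) i) (hgood : AboveW a b g)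
    (j : ℕ) (hj : j < n) :
    minIdx a b n (g.rotate j) = (n - j) % n := by
  have hnpos : 0 < n := by omega
  obtain ⟨hlen, hew, hnw, hSw⟩ := WF_facts a b i n hia hib hn g hg
  rcases Nat.eq_zero_or_pos j with rfl | hjpos
  · rw [List.rotate_zero, Nat.sub_zero, Nat.mod_self]
    exact (good_iff_minIdx a b i n ha hb hco hia hib hn g hg).mp hgood
  · have hmod : (n - j) % n = n - j := Nat.mod_eq_of_lt (by omega)
    rw [hmod]
    set w := g.rotate j with hwdef
    have hwmem : w ∈ wordsF n (a-i) (b-i) i := rotate_mem_WF a b i n g hg j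
    obtain ⟨hmem, hmin⟩ := minIdx_spec a b n hnpos w
    have hSg : ∀ k, 0 ≤ SZ a b (g.take k) := (aboveW_iff_SZ a b g).mp hgood
    -- value at n - j
    have hval : SZ a b (w.take (n - j)) = - SZ a b (g.take j) := by
      rw [hwdef, SZ_take_rotate a b g n hlen hSw j (n-j) (by omega) (by omega)]
      rw [if_pos le_rfl]
      have : j + (n - j) = n := by omega
      rw [this, List.take_of_length_le (by omega), hSw]
      ring
    have hminval : ∀ k ∈ Finset.range n, SZ a b (w.take (n-j)) ≤ SZ a b (w.take k) := by
      intro k hk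
      simp only [Finset.mem_range] at hk
      rw [hwdef, SZ_take_rotate a b g n hlen hSw j k (by omega) (by omega), hval]
      have hm : 0 ≤ SZ a b (g.take (if k ≤ n - j then j + k else k - (n - j))) := hSg _
      omega
    -- uniqueness
    by_contra hne
    have h1 := hmin (n - j) (by simp; omega)
    have h2 := hminval (minIdx a b n w) hmem
    have heq : SZ a b (w.take (minIdx a b n w)) = SZ a b (w.take (n - j)) := by omega
    simp only [Finset.mem_range] at hmem
    rcases Nat.lt_or_ge (minIdx a b n w) (n - j) with hlt | hge
    · exact SZ_take_inj a b i n ha hb hco hia hib hn w hwmem _ _ hlt (by omega) heq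
    · have hlt2 : n - j < minIdx a b n w := by omega
      exact SZ_take_inj a b i n ha hb hco hia hib hn w hwmem _ _ hlt2 (by omega) heq.symm

end SchAux
namespace SchAux
open Step List

noncomputable def GF (a b i n : ℕ) : Finset (List Step) :=
  @Finset.filter _ (AboveW a b) (Classical.decPred _) (wordsF n (a-i) (b-i) i)

lemma mem_GF (a b i n : ℕ) (w : List Step) :
    w ∈ GF a b i n ↔ w ∈ wordsF n (a-i) (b-i) i ∧ AboveW a b w := by
  unfold GF
  exact @Finset.mem_filter _ _ (Classical.decPred _) _ _

lemma cycle_count (a b i n : ℕ) (ha : 0 < a) (hb : 0 < b) (hco : Nat.Coprime a b)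
    (hia : i ≤ a) (hib : i ≤ b) (hn : n = a + b - i) :
    (wordsF n (a-i) (b-i) i).card = (GF a b i n).card * n := by
  classical
  have hnpos : 0 < n := by omega
  have key : (wordsF n (a-i) (b-i) i).card = ((GF a b i n) ×ˢ Finset.range n).card := by
    apply Finset.card_bij'
      (i := fun w (_ : w ∈ wordsF n (a-i) (b-i) i) =>
        (w.rotate (minIdx a b n w), (n - minIdx a b n w) % n))
      (j := fun p (_ : p ∈ (GF a b i n) ×ˢ Finset.range n) => p.1.rotate p.2)
    · -- hi
      intro w hw
      have hjn : minIdx a b n w < n := by simpa using (minIdx_spec a b n hnpos w).1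
      refine Finset.mem_product.mpr ⟨(mem_GF a b i n _).mpr
        ⟨rotate_mem_WF a b i n w hw _,
         good_rotate_minIdx a b i n ha hb hia hib hn w hw⟩, ?_⟩
      simp [Nat.mod_lt _ hnpos]
    · -- hj
      rintro ⟨g, j⟩ hp
      obtain ⟨hg, hj⟩ := Finset.mem_product.mp hp
      exact rotate_mem_WF a b i n g ((mem_GF a b i n g).mp hg).1 j
    · -- left_inv
      intro w hw
      have hlen : w.length = n := ((mem_wordsF _ _ _ _ w).mp hw).1
      have hjn : minIdx a b n w < n := by simpa using (minIdx_spec a b n hnpos w).1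
      simp only
      rcases Nat.eq_zero_or_pos (minIdx a b n w) with h0 | hpos
      · rw [h0]
        simp
      · rw [Nat.mod_eq_of_lt (by omega), List.rotate_rotate]
        have he : minIdx a b n w + (n - minIdx a b n w) = n := by omega
        rw [he, ← hlen, List.rotate_length]
    · -- right_inv
      rintro ⟨g, j⟩ hp
      obtain ⟨hg', hj'⟩ := Finset.mem_product.mp hp
      obtain ⟨hgmem, hgood⟩ := (mem_GF a b i n g).mp hg'
      have hjn : j < n := by simpa using hj'
      have hlen : g.length = n := ((mem_wordsF _ _ _ _ g).mp hgmem).1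
      have hmi := minIdx_rotate a b i n ha hb hco hia hib hn g hgmem hgood j hjn
      simp only [hmi, Prod.mk.injEq]
      rcases Nat.eq_zero_or_pos j with rfl | hjpos
      · simp
      · rw [Nat.mod_eq_of_lt (show n - j < n by omega)]
        constructor
        · rw [List.rotate_rotate]
          have he : j + (n - j) = n := by omega
          rw [he, ← hlen, List.rotate_length]
        · rw [show n - (n - j) = j by omega, Nat.mod_eq_of_lt hjn]
  rw [key, Finset.card_product, Finset.card_range]

lemma largeCount_eq_GF_card (a b i : ℕ) (ha : 0 < a) (hb : 0 < b)
    (hia : i ≤ a) (hib : i ≤ b) :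
    largeCount a b i = (GF a b i (a+b-i)).card := by
  have hiff : ∀ π : List Step,
      (IsLargeSchroder (nuAB a b) π ∧ π.count Step.D = i) ↔ π ∈ GF a b i (a+b-i) := by
    intro π
    rw [mem_GF, mem_wordsF]
    unfold IsLargeSchroder
    rw [eLen_nuAB, nLen_nuAB a b ha hb]
    constructor
    · rintro ⟨⟨he, hn, hwa⟩, hd⟩
      have hN : π.count Step.N = a - i := by
        unfold nLen at hn
        omega
      have hE : π.count Step.E = b - i := by
        unfold eLen at he
        omega
      have hlen : π.length = a + b - i := by
        have := length_eq_counts π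
        unfold eLen at he
        unfold nLen at hn
        omega
      exact ⟨⟨hlen, hN, hE, hd⟩, (weaklyAbove_iff a b ha hb π he hn).mp hwa⟩
    · rintro ⟨⟨hlen, hcN, hcE, hcD⟩, habove⟩
      have he : eLen π = b := by unfold eLen; omega
      have hn : nLen π = a := by unfold nLen; omega
      exact ⟨⟨he, hn, (weaklyAbove_iff a b ha hb π he hn).mpr habove⟩, hcD⟩
  unfold largeCount
  rw [Nat.card_congr (Equiv.subtypeEquivRight hiff), Nat.card_eq_fintype_card,
    Fintype.card_coe]

lemma largeCount_zero (a b i : ℕ) (hbi : b < i) : largeCount a b i = 0 := by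
  unfold largeCount
  refine Nat.card_eq_zero.mpr (Or.inl ⟨?_⟩)
  rintro ⟨π, ⟨he, -, -⟩, hd⟩
  rw [eLen_nuAB] at he
  unfold eLen at he
  omega

lemma alg1 (a b i : ℕ) (ha : 0 < a) (hb : 0 < b) (hia : i ≤ a) (hib : i ≤ b)
    (g : ℕ) (hg : (wordsF (a+b-i) (a-i) (b-i) i).card = g * (a+b-i))
    (hW : (a-i).factorial * (b-i).factorial * i.factorial *
        (wordsF (a+b-i) (a-i) (b-i) i).card = (a+b-i).factorial) :
    a * g = Nat.choose a i * Nat.choose (a+b-1-i) (b-i) := by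
  have hfac1 : Nat.choose a i * i.factorial * (a-i).factorial = a.factorial :=
    Nat.choose_mul_factorial_mul_factorial hia
  have e1 : a + b - 1 - i - (b - i) = a - 1 := by omega
  have hfac2 : Nat.choose (a+b-1-i) (b-i) * (b-i).factorial * (a-1).factorial
      = (a+b-1-i).factorial := by
    have h := Nat.choose_mul_factorial_mul_factorial (show b - i ≤ a+b-1-i by omega)
    rw [e1] at h
    exact h
  have hfacn : (a+b-i).factorial = (a+b-i) * (a+b-1-i).factorial := by
    conv_lhs => rw [show a+b-i = (a+b-1-i)+1 by omega]
    rw [Nat.factorial_succ]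
    congr 1
    omega
  have hafac : a.factorial = a * (a-1).factorial := by
    conv_lhs => rw [show a = (a-1)+1 by omega]
    rw [Nat.factorial_succ]
    congr 1
    omega
  have hKpos : 0 < (a+b-i) *
      (i.factorial * (a-i).factorial * (b-i).factorial * (a-1).factorial) :=
    Nat.mul_pos (by omega) (by positivity)
  apply Nat.eq_of_mul_eq_mul_left hKpos
  calc (a+b-i) * (i.factorial * (a-i).factorial * (b-i).factorial * (a-1).factorial)
        * (a * g)
      = a * (a-1).factorial *
          ((a-i).factorial * (b-i).factorial * i.factorial * (g * (a+b-i))) := by ring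
    _ = a * (a-1).factorial *
          ((a-i).factorial * (b-i).factorial * i.factorial *
            (wordsF (a+b-i) (a-i) (b-i) i).card) := by rw [hg]
    _ = a * (a-1).factorial * (a+b-i).factorial := by rw [hW]
    _ = a.factorial * ((a+b-i) * (a+b-1-i).factorial) := by rw [hafac, hfacn]; try ring
    _ = (Nat.choose a i * i.factorial * (a-i).factorial) *
          ((a+b-i) * (Nat.choose (a+b-1-i) (b-i) * (b-i).factorial * (a-1).factorial)) := by
        rw [hfac1, hfac2]
    _ = (a+b-i) * (i.factorial * (a-i).factorial * (b-i).factorial * (a-1).factorial)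
        * (Nat.choose a i * Nat.choose (a+b-1-i) (b-i)) := by ring

lemma alg2 (a b i : ℕ) (ha : 0 < a) (hb : 0 < b) (hia : i ≤ a) (hib : i ≤ b)
    (g : ℕ) (hg : (wordsF (a+b-i) (a-i) (b-i) i).card = g * (a+b-i))
    (hW : (a-i).factorial * (b-i).factorial * i.factorial *
        (wordsF (a+b-i) (a-i) (b-i) i).card = (a+b-i).factorial) :
    b * g = Nat.choose b i * Nat.choose (a+b-1-i) (a-i) := by
  have hfac1 : Nat.choose b i * i.factorial * (b-i).factorial = b.factorial :=
    Nat.choose_mul_factorial_mul_factorial hib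
  have e1 : a + b - 1 - i - (a - i) = b - 1 := by omega
  have hfac2 : Nat.choose (a+b-1-i) (a-i) * (a-i).factorial * (b-1).factorial
      = (a+b-1-i).factorial := by
    have h := Nat.choose_mul_factorial_mul_factorial (show a - i ≤ a+b-1-i by omega)
    rw [e1] at h
    exact h
  have hfacn : (a+b-i).factorial = (a+b-i) * (a+b-1-i).factorial := by
    conv_lhs => rw [show a+b-i = (a+b-1-i)+1 by omega]
    rw [Nat.factorial_succ]
    congr 1
    omega
  have hafac : b.factorial = b * (b-1).factorial := by
    conv_lhs => rw [show b = (b-1)+1 by omega]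
    rw [Nat.factorial_succ]
    congr 1
    omega
  have hKpos : 0 < (a+b-i) *
      (i.factorial * (a-i).factorial * (b-i).factorial * (b-1).factorial) :=
    Nat.mul_pos (by omega) (by positivity)
  apply Nat.eq_of_mul_eq_mul_left hKpos
  calc (a+b-i) * (i.factorial * (a-i).factorial * (b-i).factorial * (b-1).factorial)
        * (b * g)
      = b * (b-1).factorial *
          ((a-i).factorial * (b-i).factorial * i.factorial * (g * (a+b-i))) := by ring
    _ = b * (b-1).factorial *
          ((a-i).factorial * (b-i).factorial * i.factorial *
            (wordsF (a+b-i) (a-i) (b-i) i).card) := by rw [hg]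
    _ = b * (b-1).factorial * (a+b-i).factorial := by rw [hW]
    _ = b.factorial * ((a+b-i) * (a+b-1-i).factorial) := by rw [hafac, hfacn]; try ring
    _ = (Nat.choose b i * i.factorial * (b-i).factorial) *
          ((a+b-i) * (Nat.choose (a+b-1-i) (a-i) * (a-i).factorial * (b-1).factorial)) := by
        rw [hfac1, hfac2]
    _ = (a+b-i) * (i.factorial * (a-i).factorial * (b-i).factorial * (b-1).factorial)
        * (Nat.choose b i * Nat.choose (a+b-1-i) (a-i)) := by ring

end SchAux

theorem largeCount_formula' (a b i : ℕ) (ha : 0 < a) (hb : 0 < b)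
    (hco : Nat.Coprime a b) (hi : i ≤ a) :
    a * largeCount a b i = Nat.choose a i * chooseZ (a + b - 1 - i) ((b : ℤ) - i) ∧
    b * largeCount a b i = Nat.choose b i * chooseZ (a + b - 1 - i) ((a : ℤ) - i) := by
  by_cases hib : i ≤ b
  · have hcount := SchAux.largeCount_eq_GF_card a b i ha hb hi hib
    have hcyc := SchAux.cycle_count a b i (a+b-i) ha hb hco hi hib rfl
    have hW := SchAux.wordsF_card (a+b-i) (a-i) (b-i) i (by omega)
    have hch1 : chooseZ (a+b-1-i) ((b:ℤ) - i) = Nat.choose (a+b-1-i) (b-i) := by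
      unfold chooseZ
      rw [if_pos (by omega : (0:ℤ) ≤ (b:ℤ) - i)]
      congr 1
      omega
    have hch2 : chooseZ (a+b-1-i) ((a:ℤ) - i) = Nat.choose (a+b-1-i) (a-i) := by
      unfold chooseZ
      rw [if_pos (by omega : (0:ℤ) ≤ (a:ℤ) - i)]
      congr 1
      omega
    rw [hch1, hch2, hcount]
    exact ⟨SchAux.alg1 a b i ha hb hi hib _ hcyc hW,
           SchAux.alg2 a b i ha hb hi hib _ hcyc hW⟩
  · push_neg at hib
    rw [SchAux.largeCount_zero a b i hib]
    constructor
    · rw [show chooseZ (a+b-1-i) ((b:ℤ)-i) = 0 by unfold chooseZ; rw [if_neg (by omega)]]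
      simp
    · rw [Nat.choose_eq_zero_of_lt hib]
      simp

/-- For coprime positive `a, b` and `0 ≤ i ≤ a`, the number of large
`(a,b)`-Schröder paths with exactly `i` diagonal steps satisfies
`Sch(a,b,i) = (1/a)·C(a,i)·C(a+b−1−i, b−i) = (1/b)·C(b,i)·C(a+b−1−i, a−i)`. -/
theorem largeCount_formula (a b i : ℕ) (ha : 0 < a) (hb : 0 < b)
    (hco : Nat.Coprime a b) (hi : i ≤ a) :
    a * largeCount a b i = Nat.choose a i * chooseZ (a + b - 1 - i) ((b : ℤ) - i) ∧
    b * largeCount a b i = Nat.choose b i * chooseZ (a + b - 1 - i) ((a : ℤ) - i) := by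
  exact largeCount_formula' a b i ha hb hco hi
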